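/- Let $A_1,\dots,A_d$ be self-adjoint operators on a Hilbert space $H$ such that $\sum_{j=1}^d \epsilon_j A_j \leq I$ for all sign vectors $\epsilon \in \{-1,1\}^d$. Then there exist a Hilbert space $K$, an isometry $V : H \to K$, and commuting self-adjoint contractions $T_1,\dots,T_d$ on $K$ with $A_j = V^* T_j V$ for all $j$. -/

import Mathlib

open scoped InnerProductSpace

set_option maxHeartbeats 1000000
set_option synthInstance.maxHeartbeats 400000

section aux

variable {d : ℕ}

/-- sign function -/
noncomputable def sgn (s : Fin d → Bool) (j : Fin d) : ℝ := if s j then 1 else -1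

lemma sgn_sq (s : Fin d → Bool) (j : Fin d) : sgn s j * sgn s j = 1 := by
  unfold sgn; by_cases h : s j <;> simp [h]

lemma sgn_update (s : Fin d → Bool) (j : Fin d) :
    sgn (Function.update s j (!s j)) j = - sgn s j := by
  unfold sgn; by_cases h : s j <;> simp [h]

lemma sgn_update_ne (s : Fin d → Bool) (j k : Fin d) (h : j ≠ k) :
    sgn (Function.update s k (!s k)) j = sgn s j := by
  unfold sgn; rw [Function.update_of_ne h]

lemma sum_sgn (j : Fin d) : ∑ s : Fin d → Bool, sgn s j = 0 := by
  classical
  apply Finset.sum_ninvolution (fun s => Function.update s j (!s j))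
  · intro s; rw [sgn_update]; ring
  · intro s _ hc
    have := congrFun hc j
    simp at this
  · intro s; simp
  · intro s
    funext k
    by_cases h : k = j
    · subst h; simp
    · simp [Function.update_of_ne h]

lemma sum_sgn_mul (j k : Fin d) (hjk : k ≠ j) :
    ∑ s : Fin d → Bool, sgn s j * sgn s k = 0 := by
  classical
  apply Finset.sum_ninvolution (fun s => Function.update s k (!s k))
  · intro s; rw [sgn_update, sgn_update_ne s j k (Ne.symm hjk)]; ring
  · intro s _ hc
    have := congrFun hc k
    simp at this
  · intro s; simp
  · intro s
    funext m
    by_cases h : m = k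
    · subst h; simp
    · simp [Function.update_of_ne h]

variable {H : Type} [NormedAddCommGroup H] [InnerProductSpace ℂ H] [CompleteSpace H]

/-- The positive pieces of the decomposition. -/
noncomputable def Pop (A : Fin d → H →L[ℂ] H) (s : Fin d → Bool) : H →L[ℂ] H :=
  ((2:ℝ)^d)⁻¹ • ((1 : H →L[ℂ] H) + ∑ j, sgn s j • A j)

lemma two_pow_ne : ((2:ℝ)^d) ≠ 0 := pow_ne_zero _ two_ne_zero

lemma Pop_nonneg (A : Fin d → H →L[ℂ] H)
    (hdiamond : ∀ ε : Fin d → ℝ, (∀ j, ε j = 1 ∨ ε j = -1) →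
      ((1 : H →L[ℂ] H) - ∑ j, ε j • A j).IsPositive) (s : Fin d → Bool) :
    0 ≤ Pop A s := by
  rw [ContinuousLinearMap.nonneg_iff_isPositive]
  have h1 : ((1 : H →L[ℂ] H) - ∑ j, (-(sgn s j)) • A j).IsPositive := by
    apply hdiamond
    intro j
    unfold sgn
    by_cases h : s j <;> simp [h]
  have h2 : (1 : H →L[ℂ] H) - ∑ j, (-(sgn s j)) • A j
      = (1 : H →L[ℂ] H) + ∑ j, sgn s j • A j := by
    simp [neg_smul, Finset.sum_neg_distrib, sub_neg_eq_add]
  rw [h2] at h1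
  -- positivity of nonneg real scalar multiple
  constructor
  · intro u v
    have hsym := ContinuousLinearMap.isSelfAdjoint_iff_isSymmetric.mp h1.isSelfAdjoint
    show ⟪(((2:ℝ)^d)⁻¹ • ((1 : H →L[ℂ] H) + ∑ j, sgn s j • A j)) u, v⟫_ℂ
        = ⟪u, (((2:ℝ)^d)⁻¹ • ((1 : H →L[ℂ] H) + ∑ j, sgn s j • A j)) v⟫_ℂ
    rw [ContinuousLinearMap.smul_apply, ContinuousLinearMap.smul_apply,
      ← Complex.coe_smul, ← Complex.coe_smul, inner_smul_left, inner_smul_right,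
      Complex.conj_ofReal]
    congr 1
    exact hsym u v
  · intro x
    rw [ContinuousLinearMap.reApplyInnerSelf_apply, Pop,
      ContinuousLinearMap.smul_apply, ← Complex.coe_smul, inner_smul_left,
      Complex.conj_ofReal]
    rw [show ∀ z : ℂ, RCLike.re z = z.re from fun _ => rfl, Complex.re_ofReal_mul]
    exact mul_nonneg (by positivity) (h1.re_inner_nonneg_left x)

lemma sum_Pop (A : Fin d → H →L[ℂ] H) :
    ∑ s : Fin d → Bool, Pop A s = 1 := by
  classical
  unfold Pop
  rw [← Finset.smul_sum]
  have h1 : ∑ s : Fin d → Bool, ((1 : H →L[ℂ] H) + ∑ j, sgn s j • A j)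
      = (2^d : ℕ) • (1 : H →L[ℂ] H) + ∑ s : Fin d → Bool, ∑ j, sgn s j • A j := by
    rw [Finset.sum_add_distrib, Finset.sum_const]
    congr 2
    simp [Fintype.card_fun]
  rw [h1]
  have h2 : ∑ s : Fin d → Bool, ∑ j, sgn s j • A j = 0 := by
    rw [Finset.sum_comm]
    apply Finset.sum_eq_zero
    intro j _
    rw [← Finset.sum_smul, sum_sgn, zero_smul]
  rw [h2, add_zero, ← Nat.cast_smul_eq_nsmul ℝ, smul_smul]
  have hc : ((2:ℝ)^d)⁻¹ * ((2^d : ℕ) : ℝ) = 1 := by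
    push_cast
    exact inv_mul_cancel₀ two_pow_ne
  rw [hc, one_smul]

lemma sum_sgn_smul_Pop (A : Fin d → H →L[ℂ] H) (j : Fin d) :
    ∑ s : Fin d → Bool, sgn s j • Pop A s = A j := by
  classical
  unfold Pop
  have h0 : ∀ s : Fin d → Bool, sgn s j • (((2:ℝ)^d)⁻¹ •
      ((1 : H →L[ℂ] H) + ∑ k, sgn s k • A k))
      = ((2:ℝ)^d)⁻¹ • (sgn s j • (1 : H →L[ℂ] H)
          + ∑ k, (sgn s j * sgn s k) • A k) := by
    intro s
    rw [smul_comm, smul_add, Finset.smul_sum]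
    simp_rw [smul_smul]
  simp_rw [h0]
  rw [← Finset.smul_sum, Finset.sum_add_distrib]
  have h2 : ∑ s : Fin d → Bool, sgn s j • (1 : H →L[ℂ] H) = 0 := by
    rw [← Finset.sum_smul, sum_sgn, zero_smul]
  have h3 : ∑ s : Fin d → Bool, ∑ k, (sgn s j * sgn s k) • A k
      = ((2:ℝ)^d) • A j := by
    rw [Finset.sum_comm]
    rw [Finset.sum_eq_single j]
    · rw [← Finset.sum_smul]
      congr 1
      simp_rw [sgn_sq]
      rw [Finset.sum_const, Finset.card_univ, Fintype.card_fun]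
      simp [nsmul_eq_mul]
    · intro k _ hk
      rw [← Finset.sum_smul, sum_sgn_mul j k hk, zero_smul]
    · intro h; exact absurd (Finset.mem_univ j) h
  rw [h2, h3, zero_add, smul_smul, inv_mul_cancel₀ two_pow_ne, one_smul]

end aux

/-- If `A₁,…,A_d` are self-adjoint operators with `∑ εⱼ Aⱼ ≤ I` for all sign vectors
`ε ∈ {-1,1}^d`, then `A` dilates to a commuting tuple of self-adjoint contractions. -/
theorem stmt_6 (d : ℕ) {H : Type} [NormedAddCommGroup H] [InnerProductSpace ℂ H]
    [CompleteSpace H] (A : Fin d → H →L[ℂ] H)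
    (hsa : ∀ j, IsSelfAdjoint (A j))
    (hdiamond : ∀ ε : Fin d → ℝ, (∀ j, ε j = 1 ∨ ε j = -1) →
      ((1 : H →L[ℂ] H) - ∑ j, ε j • A j).IsPositive) :
    ∃ (K : Type) (_ : NormedAddCommGroup K) (_ : InnerProductSpace ℂ K)
      (_ : CompleteSpace K) (V : H →L[ℂ] K) (T : Fin d → K →L[ℂ] K),
      Isometry V ∧
      (∀ i j, Commute (T i) (T j)) ∧
      (∀ j, IsSelfAdjoint (T j)) ∧
      (∀ j, ‖T j‖ ≤ 1) ∧
      (∀ j, A j = (ContinuousLinearMap.adjoint V) ∘L (T j) ∘L V) := by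
  classical
  set K : Type := PiLp 2 (fun _ : Fin d → Bool => H) with hK
  haveI : CompleteSpace K :=
    inferInstance
  -- square roots
  set B : (Fin d → Bool) → H →L[ℂ] H := fun s => CFC.sqrt (Pop A s) with hB
  have hBnn : ∀ s, (0 : H →L[ℂ] H) ≤ B s := fun s => CFC.sqrt_nonneg _
  have hBsa : ∀ s, IsSelfAdjoint (B s) := fun s =>
    ((ContinuousLinearMap.nonneg_iff_isPositive _).mp (hBnn s)).isSelfAdjoint
  have hBsym : ∀ s, (B s : H →ₗ[ℂ] H).IsSymmetric := fun s =>
    ContinuousLinearMap.isSelfAdjoint_iff_isSymmetric.mp (hBsa s)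
  have hBflip : ∀ (s : Fin d → Bool) (u v : H), ⟪B s u, v⟫_ℂ = ⟪u, B s v⟫_ℂ :=
    fun s u v => hBsym s u v
  have hBmul : ∀ s, (B s) ∘L (B s) = Pop A s := by
    intro s
    have := CFC.sq_sqrt (Pop A s) (Pop_nonneg A hdiamond s)
    rw [pow_two] at this
    exact this
  -- key operator identities
  have hkey : ∀ j, ∑ s : Fin d → Bool, sgn s j • ((B s) ∘L (B s)) = A j := by
    intro j
    simp_rw [hBmul]
    exact sum_sgn_smul_Pop A j
  have hsum1 : ∑ s : Fin d → Bool, (B s) ∘L (B s) = 1 := by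
    simp_rw [hBmul]; exact sum_Pop A
  -- the isometry V
  let Vlin : H →ₗ[ℂ] K :=
    { toFun := fun x => WithLp.toLp 2 (fun s => B s x)
      map_add' := by intro x y; ext s; exact (B s).map_add x y
      map_smul' := by intro c x; ext s; exact (B s).map_smul c x }
  have hVinner : ∀ x y : H, ⟪Vlin x, Vlin y⟫_ℂ = ⟪x, y⟫_ℂ := by
    intro x y
    rw [PiLp.inner_apply]
    have h1 : ∀ s : Fin d → Bool, ⟪(Vlin x) s, (Vlin y) s⟫_ℂ
        = ⟪((B s ∘L B s) x), y⟫_ℂ := by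
      intro s
      show ⟪B s x, B s y⟫_ℂ = _
      exact (hBflip s (B s x) y).symm
    simp_rw [h1]
    rw [← sum_inner]
    congr 1
    rw [← ContinuousLinearMap.sum_apply, hsum1, ContinuousLinearMap.one_apply]
  have hVnorm : ∀ x : H, ‖Vlin x‖ = ‖x‖ := by
    intro x
    rw [@norm_eq_sqrt_re_inner ℂ, @norm_eq_sqrt_re_inner ℂ, hVinner]
  let V : H →L[ℂ] K := Vlin.mkContinuous 1 (by intro x; rw [hVnorm, one_mul])
  have hVapp : ∀ (x : H) (s : Fin d → Bool), (V x) s = B s x := fun _ _ => rfl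
  -- the commuting tuple T
  let Tlin : Fin d → K →ₗ[ℂ] K := fun j =>
    { toFun := fun x => WithLp.toLp 2 (fun s => (sgn s j : ℂ) • x s)
      map_add' := by intro x y; ext s; exact smul_add _ (x s) (y s)
      map_smul' := by intro c x; ext s; exact smul_comm _ c (x s)
    }
  have hsgn_norm : ∀ (s : Fin d → Bool) (j : Fin d), ‖(sgn s j : ℂ)‖ = 1 := by
    intro s j
    unfold sgn
    by_cases h : s j <;> simp [h]
  have hTnorm : ∀ (j : Fin d) (x : K), ‖Tlin j x‖ = ‖x‖ := by
    intro j x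
    rw [@norm_eq_sqrt_re_inner ℂ, @norm_eq_sqrt_re_inner ℂ]
    congr 2
    rw [PiLp.inner_apply, PiLp.inner_apply]
    apply Finset.sum_congr rfl
    intro s _
    show ⟪(sgn s j : ℂ) • x s, (sgn s j : ℂ) • x s⟫_ℂ = ⟪x s, x s⟫_ℂ
    rw [inner_smul_left, inner_smul_right, ← mul_assoc]
    have : (starRingEnd ℂ) (sgn s j : ℂ) * (sgn s j : ℂ) = 1 := by
      rw [Complex.conj_ofReal, ← Complex.ofReal_mul, sgn_sq]
      simp
    rw [this, one_mul]
  let T : Fin d → K →L[ℂ] K := fun j =>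
    (Tlin j).mkContinuous 1 (by intro x; rw [hTnorm, one_mul])
  have hTapp : ∀ (j : Fin d) (x : K) (s : Fin d → Bool),
      (T j x) s = (sgn s j : ℂ) • x s := fun _ _ _ => rfl
  refine ⟨K, inferInstance, inferInstance, inferInstance, V, T, ?_, ?_, ?_, ?_, ?_⟩
  · -- isometry
    apply AddMonoidHomClass.isometry_of_norm
    intro x
    exact hVnorm x
  · -- commuting
    intro i j
    refine ContinuousLinearMap.ext fun x => ?_
    ext s
    show (T i (T j x)) s = (T j (T i x)) s
    rw [hTapp, hTapp, hTapp, hTapp, smul_comm]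
  · -- self-adjoint
    intro j
    rw [ContinuousLinearMap.isSelfAdjoint_iff_isSymmetric]
    intro x y
    rw [PiLp.inner_apply, PiLp.inner_apply]
    apply Finset.sum_congr rfl
    intro s _
    show ⟪(sgn s j : ℂ) • x s, y s⟫_ℂ = ⟪x s, (sgn s j : ℂ) • y s⟫_ℂ
    rw [inner_smul_left, inner_smul_right, Complex.conj_ofReal]
  · -- norm bound
    intro j
    apply ContinuousLinearMap.opNorm_le_bound _ zero_le_one
    intro x
    rw [one_mul]
    exact le_of_eq (hTnorm j x)
  · -- compression
    intro j
    refine ContinuousLinearMap.ext fun x => ?_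
    apply ext_inner_right ℂ
    intro y
    rw [ContinuousLinearMap.comp_apply, ContinuousLinearMap.comp_apply,
      ContinuousLinearMap.adjoint_inner_left]
    have hlhs : ⟪A j x, y⟫_ℂ = ∑ s : Fin d → Bool,
        (sgn s j : ℂ) * ⟪B s (B s x), y⟫_ℂ := by
      conv_lhs => rw [← hkey j]
      rw [ContinuousLinearMap.sum_apply, sum_inner]
      apply Finset.sum_congr rfl
      intro s _
      rw [ContinuousLinearMap.smul_apply, ContinuousLinearMap.comp_apply]
      rw [← Complex.coe_smul, inner_smul_left, Complex.conj_ofReal]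
    have hrhs : ⟪T j (V x), V y⟫_ℂ = ∑ s : Fin d → Bool,
        (sgn s j : ℂ) * ⟪B s (B s x), y⟫_ℂ := by
      rw [PiLp.inner_apply]
      apply Finset.sum_congr rfl
      intro s _
      rw [hTapp, hVapp, hVapp, inner_smul_left, Complex.conj_ofReal]
      congr 1
      exact (hBflip s (B s x) y).symm
    rw [hlhs, hrhs]
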